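/- Let y ∈ A^ℤ be uniformly recurrent and let p ≥ 1 be an integer. Suppose there exist k ∈ ℤ, n_0 ∈ ℤ and a letter a ∈ A such that y_{k+np} = a for all n > n_0. Then for every z in the subshift generated by y (the closure of the shift-orbit of y in A^ℤ), there exist i with 0 ≤ i < p and a letter b ∈ A such that z_{i+np} = b for all n ∈ ℤ. -/
import Mathlib


/-- The `k`-th power of the shift: `(S^k x) n = x (n + k)`. -/
def shiftZ {A : Type*} (k : ℤ) (x : ℤ → A) : ℤ → A := fun n => x (n + k)

/-- `y` is uniformly recurrent. -/
def UniformlyRecurrent {A : Type*} (y : ℤ → A) : Prop :=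
  ∀ (m : ℕ) (i : ℤ), ∃ B : ℕ, ∀ k : ℤ, ∃ j : ℤ, k ≤ j ∧ j ≤ k + B ∧
    ∀ t : Fin m, y (j + t) = y (i + t)

/-- Pigeonhole: if for every `L` some offset `i < p` works on the window `|n| ≤ L`,
then a single offset works for all `n`. -/
lemma pigeon_ap {A : Type*} (p : ℕ) (f : ℤ → A) (a : A)
    (h : ∀ L : ℕ, ∃ i : ℕ, i < p ∧ ∀ n : ℤ, |n| ≤ (L : ℤ) → f ((i : ℤ) + n * p) = a) :
    ∃ i : ℕ, i < p ∧ ∀ n : ℤ, f ((i : ℤ) + n * p) = a := by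
  choose g hg1 hg2 using h
  let g' : ℕ → Fin p := fun L => ⟨g L, hg1 L⟩
  have : Nonempty (Fin p) := ⟨g' 0⟩
  obtain ⟨i, hi⟩ := Finite.exists_infinite_fiber g'
  refine ⟨i.1, i.2, fun n => ?_⟩
  have hinf : (g' ⁻¹' {i}).Infinite := Set.infinite_coe_iff.mp hi
  obtain ⟨L, hL, hLn⟩ := hinf.exists_gt n.natAbs
  have hgi : g L = i.1 := congrArg Fin.val hL
  have habs : |n| ≤ (L : ℤ) := by
    rw [Int.abs_eq_natAbs]; exact_mod_cast (le_of_lt hLn)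
  have := hg2 L n habs
  rwa [hgi] at this

/-- A uniformly recurrent sequence whose tail along an AP is constant has a full
constant AP. -/
lemma fullAP {A : Type*} (y : ℤ → A) (hur : UniformlyRecurrent y)
    (p : ℕ) (hp : 1 ≤ p) (k n0 : ℤ) (a : A)
    (hconst : ∀ n : ℤ, n0 < n → y (k + n * p) = a) :
    ∃ i : ℕ, i < p ∧ ∀ n : ℤ, y ((i : ℤ) + n * p) = a := by
  have hp' : (0 : ℤ) < p := by exact_mod_cast hp
  apply pigeon_ap p
  intro L
  obtain ⟨B, hB⟩ := hur (2 * L * p + p) (-(L : ℤ) * p)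
  obtain ⟨j, hj1, hj2, hj3⟩ := hB (k + (n0 + 1) * p)
  set q := (k - j) / (p : ℤ) with hq
  set t0 := (k - j) % (p : ℤ) with ht0
  have ht0nn : 0 ≤ t0 := Int.emod_nonneg _ (ne_of_gt hp')
  have ht0lt : t0 < p := Int.emod_lt_of_pos _ hp'
  have hdecomp : k - j = p * q + t0 := (Int.mul_ediv_add_emod _ _).symm
  have hqle : n0 + 1 ≤ -q := by
    have h1 : (p : ℤ) * (n0 + 1) ≤ (p : ℤ) * (-q) := by nlinarith
    exact le_of_mul_le_mul_left h1 hp'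
  refine ⟨t0.toNat, by omega, fun n hn => ?_⟩
  have habs1 : -(L : ℤ) ≤ n := neg_le_of_abs_le hn
  have habs2 : n ≤ (L : ℤ) := le_of_abs_le hn
  set s : ℕ := (n + L).toNat with hs
  have hsint : (s : ℤ) = n + L := Int.toNat_of_nonneg (by omega)
  have ht : t0.toNat + s * p < 2 * L * p + p := by
    have hsL : s ≤ 2 * L := by omega
    have : s * p ≤ 2 * L * p := Nat.mul_le_mul_right p hsL
    omega
  have key := hj3 ⟨t0.toNat + s * p, ht⟩
  simp only [Fin.val_mk] at key
  have hcast : ((t0.toNat + s * p : ℕ) : ℤ) = t0 + (s : ℤ) * p := by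
    push_cast [Int.toNat_of_nonneg ht0nn]; ring
  rw [hcast] at key
  have hL1 : j + (t0 + (s : ℤ) * p) = k + ((s : ℤ) - q) * p := by
    have : j = k - (p * q + t0) := by omega
    rw [this]; ring
  have hR1 : -(L : ℤ) * p + (t0 + (s : ℤ) * p) = (t0.toNat : ℤ) + n * p := by
    rw [Int.toNat_of_nonneg ht0nn, hsint]; ring
  rw [hL1, hR1] at key
  rw [← key]
  apply hconst
  have hs0 : 0 ≤ (s : ℤ) := Int.natCast_nonneg s
  omega

/-- If a uniformly recurrent sequence `y` has a subsequence `(y_{k+np})_{n>n₀}` that is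
eventually constant along an arithmetic progression of common difference `p`, then
every `z` in the subshift generated by `y` has a constant arithmetic subsequence
`(z_{i+np})_{n∈ℤ}` for some `0 ≤ i < p`. -/
theorem eventually_constant_arithmetic_subsequence
    {A : Type*} [Fintype A] [TopologicalSpace A] [DiscreteTopology A]
    (y : ℤ → A) (hur : UniformlyRecurrent y)
    (p : ℕ) (hp : 1 ≤ p)
    (k n0 : ℤ) (a : A) (hconst : ∀ n : ℤ, n0 < n → y (k + n * p) = a)
    (z : ℤ → A) (hz : z ∈ closure {w : ℤ → A | ∃ j : ℤ, w = shiftZ j y}) :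
    ∃ i : ℕ, i < p ∧ ∃ b : A, ∀ n : ℤ, z ((i : ℤ) + n * p) = b := by
  have hp' : (0 : ℤ) < p := by exact_mod_cast hp
  obtain ⟨i, hip, hia⟩ := fullAP y hur p hp k n0 a hconst
  have key : ∀ L : ℕ, ∃ i' : ℕ, i' < p ∧ ∀ n : ℤ, |n| ≤ (L : ℤ) →
      z ((i' : ℤ) + n * p) = a := by
    intro L
    set F : Set ℤ := ↑(Finset.Icc (-(L : ℤ) * p - p) ((L : ℤ) * p + p)) with hF
    have hVopen : IsOpen (F.pi fun x => ({z x} : Set A)) := by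
      apply isOpen_set_pi (Finset.finite_toSet _)
      intro x _; exact isOpen_discrete _
    have hzV : z ∈ F.pi fun x => ({z x} : Set A) := fun x _ => rfl
    obtain ⟨w, hwV, jj, hwj⟩ :=
      (mem_closure_iff.mp hz) _ hVopen hzV
    set q := ((i : ℤ) - jj) / (p : ℤ) with hq
    set i' := ((i : ℤ) - jj) % (p : ℤ) with hi'
    have hi'nn : 0 ≤ i' := Int.emod_nonneg _ (ne_of_gt hp')
    have hi'lt : i' < p := Int.emod_lt_of_pos _ hp'
    have hdecomp : (i : ℤ) - jj = p * q + i' := (Int.mul_ediv_add_emod _ _).symm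
    refine ⟨i'.toNat, by omega, fun n hn => ?_⟩
    have habs1 : -(L : ℤ) ≤ n := neg_le_of_abs_le hn
    have habs2 : n ≤ (L : ℤ) := le_of_abs_le hn
    have hnp1 : -(L : ℤ) * p ≤ n * p := by nlinarith
    have hnp2 : n * p ≤ (L : ℤ) * p := by nlinarith
    have hxF : ((i'.toNat : ℤ) + n * p) ∈ F := by
      rw [hF]
      simp only [Finset.coe_Icc, Set.mem_Icc]
      rw [Int.toNat_of_nonneg hi'nn]
      constructor <;> omega
    have hzw : w ((i'.toNat : ℤ) + n * p) = z ((i'.toNat : ℤ) + n * p) :=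
      hwV _ hxF
    rw [← hzw, hwj]
    show y ((i'.toNat : ℤ) + n * p + jj) = a
    have harg : (i'.toNat : ℤ) + n * p + jj = (i : ℤ) + (n - q) * p := by
      rw [Int.toNat_of_nonneg hi'nn]
      have : jj = (i : ℤ) - (p * q + i') := by omega
      rw [this]; ring
    rw [harg]
    exact hia (n - q)
  obtain ⟨i', hi'p, hi'a⟩ := pigeon_ap p z a key
  exact ⟨i', hi'p, a, hi'a⟩
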